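/- arXiv:1908.05631 — 3 statements merged into one kernel-verified Lean document; each statement's English description precedes it below -/
import Mathlib

section
/- For any E ∈ ℝ, any q > 0, and any u, f as in the context (i.e. u is 2π-periodic, twice continuously differentiable, and f = −u'' + i·q·W·u − E·u), one has ( ∫_{−π}^{π} W·|u|·|u'| )² ≤ C₀ · q⁻¹ · ( ∫_{−π}^{π} |f|·|u| ) · ( ∫_{−π}^{π} V·|u'|² ), where V is the model damping profile from the context. -/
open Real MeasureTheory intervalIntegral

/-- The model damping profile `V(x) = 0` for `|x| ≤ σ`, `V(x) = (|x| - σ)^β` otherwise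
(used only on the period `[-π, π]`). -/
noncomputable def dampV (σ β : ℝ) (x : ℝ) : ℝ :=
  if |x| ≤ σ then 0 else (|x| - σ) ^ β

lemma cs_helper {μ : Measure ℝ} [IsFiniteMeasure μ] {a b : ℝ → ℝ}
    (ha0 : ∀ x, 0 ≤ a x) (hb0 : ∀ x, 0 ≤ b x)
    (ha : MemLp a 2 μ) (hb : MemLp b 2 μ) :
    (∫ x, a x * b x ∂μ) ^ 2 ≤ (∫ x, a x ^ 2 ∂μ) * (∫ x, b x ^ 2 ∂μ) := by
  have h22 : (2 : ℝ).HolderConjugate 2 := Real.HolderConjugate.two_two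
  have ha' : MemLp a (ENNReal.ofReal 2) μ := by convert ha using 2; norm_num
  have hb' : MemLp b (ENNReal.ofReal 2) μ := by convert hb using 2; norm_num
  have hH := integral_mul_le_Lp_mul_Lq_of_nonneg h22 (ae_of_all _ ha0) (ae_of_all _ hb0) ha' hb'
  have hXa : (∫ x, a x ^ (2:ℝ) ∂μ) = ∫ x, a x ^ 2 ∂μ :=
    integral_congr_ae (ae_of_all _ fun x => Real.rpow_two _)
  have hXb : (∫ x, b x ^ (2:ℝ) ∂μ) = ∫ x, b x ^ 2 ∂μ :=
    integral_congr_ae (ae_of_all _ fun x => Real.rpow_two _)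
  rw [hXa, hXb] at hH
  set X := ∫ x, a x ^ 2 ∂μ with hX
  set Y := ∫ x, b x ^ 2 ∂μ with hY
  have hX0 : 0 ≤ X := integral_nonneg fun x => sq_nonneg _
  have hY0 : 0 ≤ Y := integral_nonneg fun x => sq_nonneg _
  have h0 : 0 ≤ ∫ x, a x * b x ∂μ := integral_nonneg fun x => mul_nonneg (ha0 x) (hb0 x)
  have h2 := pow_le_pow_left₀ h0 hH 2
  rw [mul_pow] at h2
  have e1 : (X ^ ((1:ℝ)/2)) ^ 2 = X := by
    rw [← Real.rpow_natCast (X ^ ((1:ℝ)/2)) 2, ← Real.rpow_mul hX0]; norm_num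
  have e2 : (Y ^ ((1:ℝ)/2)) ^ 2 = Y := by
    rw [← Real.rpow_natCast (Y ^ ((1:ℝ)/2)) 2, ← Real.rpow_mul hY0]; norm_num
  rwa [e1, e2] at h2

lemma bdd_meas_intervalIntegrable {g : ℝ → ℝ} (hg : Measurable g) {a b C : ℝ} (hab : a ≤ b)
    (h : ∀ x ∈ Set.Ioc a b, |g x| ≤ C) : IntervalIntegrable g volume a b := by
  rw [intervalIntegrable_iff_integrableOn_Ioc_of_le hab]
  refine ⟨hg.aestronglyMeasurable.restrict, ?_⟩
  haveI : IsFiniteMeasure (volume.restrict (Set.Ioc a b)) :=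
    ⟨by rw [Measure.restrict_apply_univ, Real.volume_Ioc]; exact ENNReal.ofReal_lt_top⟩
  exact HasFiniteIntegral.of_bounded (C := C)
    ((ae_restrict_iff' measurableSet_Ioc).2 (ae_of_all _ fun x hx => by
      simpa [Real.norm_eq_abs] using h x hx))

/-- `(∫ W |u| |u'|)² ≤ C₀ q⁻¹ (∫ |f| |u|) (∫ V |u'|²)`. -/
theorem damped_wave_W_u_u'_estimate
    (C₀ σ β : ℝ) (hC₀ : 0 < C₀) (hσ : σ ∈ Set.Ioo 0 π) (hβ : 0 ≤ β)
    (W : ℝ → ℝ) (hWper : Function.Periodic W (2 * π)) (hWmeas : Measurable W)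
    (hWbdd : ∃ M : ℝ, ∀ x : ℝ, W x ≤ M) (hWnonneg : ∀ x : ℝ, 0 ≤ W x)
    (hWV : ∀ x ∈ Set.Icc (-π) π,
      dampV σ β x / C₀ ≤ W x ∧ W x ≤ C₀ * dampV σ β x)
    (q E : ℝ) (hq : 0 < q)
    (u f : ℝ → ℂ) (hu : ContDiff ℝ 2 u) (huper : Function.Periodic u (2 * π))
    (hf : ∀ x : ℝ,
      f x = -(deriv (deriv u) x) + Complex.I * q * W x * u x - E * u x) :
    (∫ x in (-π)..π, W x * ‖u x‖ * ‖deriv u x‖) ^ 2 ≤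
      C₀ * q⁻¹ * (∫ x in (-π)..π, ‖f x‖ * ‖u x‖) *
        ∫ x in (-π)..π, dampV σ β x * ‖deriv u x‖ ^ 2 := by
  have hπ : (-π) ≤ π := by linarith [pi_pos]
  obtain ⟨M, hM⟩ := hWbdd
  -- smoothness
  have hsplit := contDiff_succ_iff_deriv.mp (show ContDiff ℝ (1+1) u by
    rw [one_add_one_eq_two]; exact hu)
  have hudiff : Differentiable ℝ u := hsplit.1
  have hu' : ContDiff ℝ 1 (deriv u) := hsplit.2.2
  have hu'diff : Differentiable ℝ (deriv u) := hu'.differentiable one_ne_zero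
  have hu''cont : Continuous (deriv (deriv u)) := hu'.continuous_deriv le_rfl
  have hu'cont : Continuous (deriv u) := hu'.continuous
  have hucont : Continuous u := hu.continuous
  -- periodicity of derivative and endpoint values
  have hu'per : Function.Periodic (deriv u) (2 * π) := by
    intro x
    have he : (fun y => u (y + 2 * π)) = u := funext huper
    have h2 : deriv (fun y => u (y + 2 * π)) x = deriv u (x + 2 * π) :=
      deriv_comp_add_const u (2 * π) x
    rw [← h2, he]
  have hupts : u π = u (-π) := by
    have := huper (-π); rwa [show -π + 2 * π = π by ring] at this
  have hu'pts : deriv u π = deriv u (-π) := by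
    have := hu'per (-π); rwa [show -π + 2 * π = π by ring] at this
  -- V basics
  have hVmeas : Measurable (dampV σ β) := by
    unfold dampV
    exact Measurable.ite (measurableSet_le measurable_abs measurable_const)
      measurable_const
      ((Real.continuous_rpow_const hβ).comp (continuous_abs.sub continuous_const)).measurable
  have hV0 : ∀ x, 0 ≤ dampV σ β x := by
    intro x; unfold dampV
    split
    · exact le_rfl
    · exact Real.rpow_nonneg (by linarith [not_le.mp (by assumption : ¬ |x| ≤ σ)]) _
  -- interval integrabilities
  have hWint : IntervalIntegrable W volume (-π) π :=
    bdd_meas_intervalIntegrable hWmeas hπ fun x _ => by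
      rw [abs_of_nonneg (hWnonneg x)]; exact hM x
  have hVint : IntervalIntegrable (dampV σ β) volume (-π) π := by
    refine bdd_meas_intervalIntegrable hVmeas hπ (C := (π - σ) ^ β) fun x hx => ?_
    rw [abs_of_nonneg (hV0 x)]
    unfold dampV
    split
    · exact Real.rpow_nonneg (by linarith [hσ.2]) _
    · have hxπ : |x| ≤ π := abs_le.2 ⟨hx.1.le, hx.2⟩
      exact Real.rpow_le_rpow (by linarith [not_le.mp (by assumption : ¬ |x| ≤ σ)])
        (by linarith) hβ
  have hWu2 : IntervalIntegrable (fun x => W x * ‖u x‖ ^ 2) volume (-π) π :=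
    hWint.mul_continuousOn ((hucont.norm.pow 2).continuousOn)
  have hWu'2 : IntervalIntegrable (fun x => W x * ‖deriv u x‖ ^ 2) volume (-π) π :=
    hWint.mul_continuousOn ((hu'cont.norm.pow 2).continuousOn)
  have hVu'2 : IntervalIntegrable (fun x => dampV σ β x * ‖deriv u x‖ ^ 2) volume (-π) π :=
    hVint.mul_continuousOn ((hu'cont.norm.pow 2).continuousOn)
  -- notation
  set R : ℝ := ∫ x in (-π)..π, W x * ‖u x‖ ^ 2 with hR
  set T : ℝ := ∫ x in (-π)..π, W x * ‖deriv u x‖ ^ 2 with hT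
  set TV : ℝ := ∫ x in (-π)..π, dampV σ β x * ‖deriv u x‖ ^ 2 with hTV
  set Fint : ℝ := ∫ x in (-π)..π, ‖f x‖ * ‖u x‖ with hFint
  set R' : ℝ := ∫ x in (-π)..π, ‖deriv u x‖ ^ 2 with hR'
  set S : ℝ := ∫ x in (-π)..π, ‖u x‖ ^ 2 with hS
  have hz : ∀ z : ℂ, z * star z = ((‖z‖ ^ 2 : ℝ) : ℂ) := fun z => by
    rw [RCLike.star_def, Complex.mul_conj, Complex.normSq_eq_norm_sq]
  -- integration by parts
  have hF : ∀ x : ℝ, HasDerivAt (fun y => deriv u y * star (u y))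
      (deriv (deriv u) x * star (u x) + deriv u x * star (deriv u x)) x := fun x =>
    (hu'diff x).hasDerivAt.mul ((hudiff x).hasDerivAt.star)
  have hIBP : (∫ x in (-π)..π,
      (deriv (deriv u) x * star (u x) + deriv u x * star (deriv u x))) = 0 := by
    rw [integral_eq_sub_of_hasDerivAt (fun x _ => hF x)
      (((hu''cont.mul hucont.star).add (hu'cont.mul hu'cont.star)).intervalIntegrable _ _)]
    rw [hupts, hu'pts]; ring
  have hi1 : IntervalIntegrable (fun x => deriv (deriv u) x * star (u x)) volume (-π) π :=
    (hu''cont.mul hucont.star).intervalIntegrable _ _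
  have hi2 : IntervalIntegrable (fun x => deriv u x * star (deriv u x)) volume (-π) π :=
    (hu'cont.mul hu'cont.star).intervalIntegrable _ _
  have hu'val : (∫ x in (-π)..π, deriv u x * star (deriv u x)) = ((R' : ℝ) : ℂ) := by
    rw [show (fun x => deriv u x * star (deriv u x))
        = fun x => ((‖deriv u x‖ ^ 2 : ℝ) : ℂ) from funext fun x => hz _]
    exact RCLike.intervalIntegral_ofReal
  have hsplitI : (∫ x in (-π)..π, deriv (deriv u) x * star (u x)) = -((R' : ℝ) : ℂ) := by
    have hadd := intervalIntegral.integral_add hi1 hi2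
    rw [hIBP] at hadd
    rw [eq_neg_of_add_eq_zero_left hadd.symm, hu'val]
  -- value of ∫ f * conj u
  set g1 : ℝ → ℂ := fun x => -(deriv (deriv u) x * star (u x)) with hg1def
  set g2 : ℝ → ℂ := fun x => Complex.I * q * ((W x * ‖u x‖ ^ 2 : ℝ) : ℂ) with hg2def
  set g3 : ℝ → ℂ := fun x => (E : ℂ) * ((‖u x‖ ^ 2 : ℝ) : ℂ) with hg3def
  have hptw : ∀ x : ℝ, f x * star (u x) = g1 x + g2 x - g3 x := by
    intro x
    rw [hf x, hg1def, hg2def, hg3def]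
    have h' : (-(deriv (deriv u) x) + Complex.I * q * W x * u x - E * u x) * star (u x)
        = -(deriv (deriv u) x * star (u x)) + Complex.I * q * (W x) * (u x * star (u x))
          - (E : ℂ) * (u x * star (u x)) := by ring
    rw [h', hz (u x)]
    push_cast
    ring
  have hg1int : IntervalIntegrable g1 volume (-π) π :=
    ((hu''cont.mul hucont.star).neg).intervalIntegrable _ _
  have hg2int : IntervalIntegrable g2 volume (-π) π := by
    have hj2 : IntervalIntegrable (fun x => ((W x * ‖u x‖ ^ 2 : ℝ) : ℂ)) volume (-π) π :=
      ⟨hWu2.1.ofReal, hWu2.2.ofReal⟩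
    exact hj2.const_mul _
  have hg3int : IntervalIntegrable g3 volume (-π) π :=
    (continuous_const.mul (Complex.continuous_ofReal.comp (hucont.norm.pow 2))).intervalIntegrable _ _
  have hg1val : (∫ x in (-π)..π, g1 x) = ((R' : ℝ) : ℂ) := by
    rw [hg1def, intervalIntegral.integral_neg, hsplitI, neg_neg]
  have hg2val : (∫ x in (-π)..π, g2 x) = Complex.I * q * ((R : ℝ) : ℂ) := by
    rw [hg2def, intervalIntegral.integral_const_mul]
    exact congrArg _ RCLike.intervalIntegral_ofReal
  have hg3val : (∫ x in (-π)..π, g3 x) = (E : ℂ) * ((S : ℝ) : ℂ) := by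
    rw [hg3def, intervalIntegral.integral_const_mul]
    exact congrArg _ RCLike.intervalIntegral_ofReal
  have hA : (∫ x in (-π)..π, f x * star (u x))
      = ((R' : ℝ) : ℂ) + Complex.I * q * ((R : ℝ) : ℂ) - (E : ℂ) * ((S : ℝ) : ℂ) := by
    rw [intervalIntegral.integral_congr (fun x _ => hptw x),
      intervalIntegral.integral_sub (hg1int.add hg2int) hg3int,
      intervalIntegral.integral_add hg1int hg2int, hg1val, hg2val, hg3val]
  -- key bound : q * R ≤ Fint
  have hAim : (∫ x in (-π)..π, f x * star (u x)).im = q * R := by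
    rw [hA]; simp
  have hqR : q * R ≤ Fint := by
    have h1 : q * R ≤ ‖∫ x in (-π)..π, f x * star (u x)‖ := by
      rw [← hAim]
      exact (le_abs_self _).trans (Complex.abs_im_le_norm _)
    refine h1.trans ((intervalIntegral.norm_integral_le_integral_norm hπ).trans (le_of_eq ?_))
    rw [hFint]
    exact intervalIntegral.integral_congr (fun x _ => by rw [norm_mul, norm_star])
  -- Cauchy-Schwarz
  haveI hfin : IsFiniteMeasure (volume.restrict (Set.Ioc (-π) π)) :=
    ⟨by rw [Measure.restrict_apply_univ, Real.volume_Ioc]; exact ENNReal.ofReal_lt_top⟩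
  obtain ⟨Cu, hCu⟩ := isCompact_Icc.exists_bound_of_continuousOn
    (s := Set.Icc (-π) π) hucont.continuousOn
  obtain ⟨Cv, hCv⟩ := isCompact_Icc.exists_bound_of_continuousOn
    (s := Set.Icc (-π) π) hu'cont.continuousOn
  set a : ℝ → ℝ := fun x => Real.sqrt (W x) * ‖u x‖ with hadef
  set b : ℝ → ℝ := fun x => Real.sqrt (W x) * ‖deriv u x‖ with hbdef
  have hsqrtW : ∀ x, Real.sqrt (W x) ≤ Real.sqrt (max M 0) := fun x =>
    Real.sqrt_le_sqrt ((hM x).trans (le_max_left _ _))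
  have haM : MemLp a 2 (volume.restrict (Set.Ioc (-π) π)) := by
    refine MemLp.of_bound
      (((Real.continuous_sqrt.measurable.comp hWmeas).mul hucont.norm.measurable).aestronglyMeasurable.restrict)
      (Real.sqrt (max M 0) * max Cu 0) ?_
    filter_upwards [ae_restrict_mem measurableSet_Ioc] with x hx
    have hxI : x ∈ Set.Icc (-π) π := Set.Ioc_subset_Icc_self hx
    rw [hadef, Real.norm_eq_abs,
      abs_of_nonneg (mul_nonneg (Real.sqrt_nonneg _) (norm_nonneg _))]
    exact mul_le_mul (hsqrtW x) ((hCu x hxI).trans (le_max_left _ _)) (norm_nonneg _)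
      (Real.sqrt_nonneg _)
  have hbM : MemLp b 2 (volume.restrict (Set.Ioc (-π) π)) := by
    refine MemLp.of_bound
      (((Real.continuous_sqrt.measurable.comp hWmeas).mul hu'cont.norm.measurable).aestronglyMeasurable.restrict)
      (Real.sqrt (max M 0) * max Cv 0) ?_
    filter_upwards [ae_restrict_mem measurableSet_Ioc] with x hx
    have hxI : x ∈ Set.Icc (-π) π := Set.Ioc_subset_Icc_self hx
    rw [hbdef, Real.norm_eq_abs,
      abs_of_nonneg (mul_nonneg (Real.sqrt_nonneg _) (norm_nonneg _))]
    exact mul_le_mul (hsqrtW x) ((hCv x hxI).trans (le_max_left _ _)) (norm_nonneg _)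
      (Real.sqrt_nonneg _)
  have ha0 : ∀ x, 0 ≤ a x := fun x => mul_nonneg (Real.sqrt_nonneg _) (norm_nonneg _)
  have hb0 : ∀ x, 0 ≤ b x := fun x => mul_nonneg (Real.sqrt_nonneg _) (norm_nonneg _)
  have hcs := cs_helper ha0 hb0 haM hbM
  have hPeq : (∫ x in (-π)..π, W x * ‖u x‖ * ‖deriv u x‖)
      = ∫ x, a x * b x ∂(volume.restrict (Set.Ioc (-π) π)) := by
    rw [intervalIntegral.integral_of_le hπ]
    refine integral_congr_ae (ae_of_all _ fun x => ?_)
    rw [hadef, hbdef]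
    show W x * ‖u x‖ * ‖deriv u x‖ = (Real.sqrt (W x) * ‖u x‖) * (Real.sqrt (W x) * ‖deriv u x‖)
    rw [show (Real.sqrt (W x) * ‖u x‖) * (Real.sqrt (W x) * ‖deriv u x‖)
        = (Real.sqrt (W x) * Real.sqrt (W x)) * (‖u x‖ * ‖deriv u x‖) by ring,
      Real.mul_self_sqrt (hWnonneg x)]
    ring
  have hReq : (∫ x, a x ^ 2 ∂(volume.restrict (Set.Ioc (-π) π))) = R := by
    rw [hR, intervalIntegral.integral_of_le hπ]
    refine integral_congr_ae (ae_of_all _ fun x => ?_)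
    show a x ^ 2 = W x * ‖u x‖ ^ 2
    rw [hadef]
    show (Real.sqrt (W x) * ‖u x‖) ^ 2 = W x * ‖u x‖ ^ 2
    rw [mul_pow, Real.sq_sqrt (hWnonneg x)]
  have hTeq : (∫ x, b x ^ 2 ∂(volume.restrict (Set.Ioc (-π) π))) = T := by
    rw [hT, intervalIntegral.integral_of_le hπ]
    refine integral_congr_ae (ae_of_all _ fun x => ?_)
    show b x ^ 2 = W x * ‖deriv u x‖ ^ 2
    rw [hbdef]
    show (Real.sqrt (W x) * ‖deriv u x‖) ^ 2 = W x * ‖deriv u x‖ ^ 2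
    rw [mul_pow, Real.sq_sqrt (hWnonneg x)]
  rw [hPeq]
  rw [hReq, hTeq] at hcs
  -- remaining comparisons
  have hTle : T ≤ C₀ * TV := by
    have hmono := intervalIntegral.integral_mono_on hπ hWu'2 (hVu'2.const_mul C₀)
      (fun x hx => by
        have h2 := (hWV x hx).2
        calc W x * ‖deriv u x‖ ^ 2 ≤ (C₀ * dampV σ β x) * ‖deriv u x‖ ^ 2 :=
              mul_le_mul_of_nonneg_right h2 (sq_nonneg _)
          _ = C₀ * (dampV σ β x * ‖deriv u x‖ ^ 2) := by ring)
    rwa [intervalIntegral.integral_const_mul] at hmono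
  have hT0 : 0 ≤ T := by
    rw [hT]
    exact intervalIntegral.integral_nonneg hπ fun x _ => mul_nonneg (hWnonneg x) (sq_nonneg _)
  have hF0 : 0 ≤ Fint := by
    rw [hFint]
    exact intervalIntegral.integral_nonneg hπ fun x _ =>
      mul_nonneg (norm_nonneg _) (norm_nonneg _)
  have hRle : R ≤ q⁻¹ * Fint := by
    have he : q * (q⁻¹ * Fint) = Fint := by field_simp
    rw [← mul_le_mul_iff_right₀ hq, he]
    exact hqR
  calc (∫ x, a x * b x ∂(volume.restrict (Set.Ioc (-π) π))) ^ 2 ≤ R * T := hcs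
    _ ≤ (q⁻¹ * Fint) * (C₀ * TV) :=
        mul_le_mul hRle hTle hT0 (mul_nonneg (inv_nonneg.2 hq.le) hF0)
    _ = C₀ * q⁻¹ * Fint * TV := by ring
end

section
/- Let a ∈ (0, π − σ]. Suppose u, f are as in the context (u is 2π-periodic, twice continuously differentiable, f = −u'' + i·q·W·u − E·u) for some q > 0 and E ∈ ℝ, and additionally f(x) = 0 for every x ∈ [−π,π] with |x| < σ + a. Then ∫_{−π}^{π} |f|·|u| ≤ C₀ · a^{−β} · q⁻¹ · ∫_{−π}^{π} |f|². -/
open Real MeasureTheory intervalIntegral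

private lemma aux_intervalIntegrable {E : Type*} [NormedAddCommGroup E] {g : ℝ → E}
    (hg : AEStronglyMeasurable g volume) (M : ℝ)
    (h : ∀ x ∈ Set.Ioc (-π) π, ‖g x‖ ≤ M) :
    IntervalIntegrable g volume (-π) π := by
  rw [intervalIntegrable_iff_integrableOn_Ioc_of_le (by linarith [Real.pi_pos])]
  exact Measure.integrableOn_of_bounded measure_Ioc_lt_top.ne hg
    ((ae_restrict_iff' measurableSet_Ioc).2 (ae_of_all _ h))

/-- If `f` vanishes on `{x ∈ [-π,π] : |x| < σ + a}`, then
`∫ |f| |u| ≤ C₀ a^{-β} q⁻¹ ∫ |f|²`. -/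
theorem damped_wave_fu_support_estimate
    (C₀ σ β : ℝ) (hC₀ : 0 < C₀) (hσ : σ ∈ Set.Ioo 0 π) (hβ : 0 ≤ β)
    (W : ℝ → ℝ) (hWper : Function.Periodic W (2 * π)) (hWmeas : Measurable W)
    (hWbdd : ∃ M : ℝ, ∀ x : ℝ, W x ≤ M) (hWnonneg : ∀ x : ℝ, 0 ≤ W x)
    (hWV : ∀ x ∈ Set.Icc (-π) π,
      dampV σ β x / C₀ ≤ W x ∧ W x ≤ C₀ * dampV σ β x)
    (a : ℝ) (ha : a ∈ Set.Ioc 0 (π - σ))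
    (q E : ℝ) (hq : 0 < q)
    (u f : ℝ → ℂ) (hu : ContDiff ℝ 2 u) (huper : Function.Periodic u (2 * π))
    (hf : ∀ x : ℝ,
      f x = -(deriv (deriv u) x) + Complex.I * q * W x * u x - E * u x)
    (hfsupp : ∀ x ∈ Set.Icc (-π) π, |x| < σ + a → f x = 0) :
    ∫ x in (-π)..π, ‖f x‖ * ‖u x‖ ≤
      C₀ * a ^ (-β) * q⁻¹ * ∫ x in (-π)..π, ‖f x‖ ^ 2 := by
  have hπ := Real.pi_pos
  have hle : (-π) ≤ π := by linarith
  have hIcc : Set.uIcc (-π) π = Set.Icc (-π) π := Set.uIcc_of_le hle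
  -- regularity of u
  have hu1 : Differentiable ℝ u := hu.differentiable (by norm_num)
  have hud : ContDiff ℝ 1 (deriv u) :=
    (contDiff_succ_iff_deriv.mp (show ContDiff ℝ (1 + 1) u by norm_num; exact hu)).2.2
  have cu : Continuous u := hu.continuous
  have cu' : Continuous (deriv u) := hud.continuous
  have cu'' : Continuous (deriv (deriv u)) := (contDiff_one_iff_deriv.mp hud).2
  -- periodicity of deriv u
  have hu'per : ∀ x : ℝ, deriv u (x + 2 * π) = deriv u x := by
    intro x
    have hfun : (fun y => u (y + 2 * π)) = u := funext fun y => huper y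
    rw [← deriv_comp_add_const u (2 * π) x, hfun]
  have huval : u π = u (-π) := by
    have h := huper (-π); rw [show -π + 2 * π = π by ring] at h; exact h
  have hu'val : deriv u π = deriv u (-π) := by
    have h := hu'per (-π); rw [show -π + 2 * π = π by ring] at h; exact h
  -- the commutator function G and its derivative
  set G : ℝ → ℂ := fun x => deriv u x * star (u x) - u x * star (deriv u x) with hGdef
  set G' : ℝ → ℂ :=
    fun x => deriv (deriv u) x * star (u x) - u x * star (deriv (deriv u) x) with hG'def
  have hGd : ∀ x : ℝ, HasDerivAt G (G' x) x := by
    intro x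
    have h1 : HasDerivAt u (deriv u x) x := (hu1 x).hasDerivAt
    have h2 : HasDerivAt (deriv u) (deriv (deriv u) x) x :=
      ((hud.differentiable (by norm_num)) x).hasDerivAt
    have h := (h2.mul h1.star).sub (h1.mul h2.star)
    refine h.congr_deriv ?_
    rw [hG'def]; ring
  have cG' : Continuous G' := (cu''.mul cu.star).sub (cu.mul cu''.star)
  have hGint : (∫ x in (-π)..π, G' x) = G π - G (-π) :=
    integral_eq_sub_of_hasDerivAt (fun x _ => hGd x) (cG'.intervalIntegrable _ _)
  have hGzero : (∫ x in (-π)..π, G' x) = 0 := by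
    rw [hGint, hGdef]; simp [huval, hu'val]
  -- bounds
  obtain ⟨Mu, hMu⟩ := (isCompact_Icc (a := -π) (b := π)).exists_bound_of_continuousOn
    cu.continuousOn
  obtain ⟨M2, hM2⟩ := (isCompact_Icc (a := -π) (b := π)).exists_bound_of_continuousOn
    cu''.continuousOn
  obtain ⟨MW, hMW⟩ := hWbdd
  set Bf : ℝ := M2 + q * MW * Mu + |E| * Mu with hBf
  have hIoc_sub : Set.Ioc (-π) π ⊆ Set.Icc (-π) π := Set.Ioc_subset_Icc_self
  have hfb : ∀ x ∈ Set.Ioc (-π) π, ‖f x‖ ≤ Bf := by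
    intro x hx
    have hx' := hIoc_sub hx
    have h1 : ‖f x‖ ≤ ‖deriv (deriv u) x‖ + q * W x * ‖u x‖ + |E| * ‖u x‖ := by
      rw [hf x]
      calc ‖-(deriv (deriv u) x) + Complex.I * q * W x * u x - E * u x‖
          ≤ ‖-(deriv (deriv u) x) + Complex.I * q * W x * u x‖ + ‖(E : ℂ) * u x‖ :=
            norm_sub_le _ _
        _ ≤ ‖-(deriv (deriv u) x)‖ + ‖Complex.I * q * W x * u x‖ + ‖(E : ℂ) * u x‖ := by
            gcongr; exact norm_add_le _ _
        _ = ‖deriv (deriv u) x‖ + q * W x * ‖u x‖ + |E| * ‖u x‖ := by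
            rw [norm_neg, norm_mul, norm_mul, norm_mul, norm_mul]
            simp [Complex.norm_real, Real.norm_eq_abs, abs_of_pos hq,
              abs_of_nonneg (hWnonneg x)]
    have h2 := hMu x hx'
    have h3 := hM2 x hx'
    have h4 := hMW x
    have h5 := hWnonneg x
    have h6 := norm_nonneg (u x)
    have h7 := norm_nonneg (deriv (deriv u) x)
    rw [hBf]
    nlinarith [abs_nonneg E, mul_le_mul h4 h2 h6 (le_trans h5 h4), hq.le]
  have hBf0 : 0 ≤ Bf := le_trans (norm_nonneg _) (hfb 0 ⟨by linarith, by linarith⟩)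
  have hMu0 : 0 ≤ Mu := le_trans (norm_nonneg _) (hMu 0 ⟨by linarith, by linarith⟩)
  -- measurability of f
  have hfm : Measurable f := by
    have : f = fun x => -(deriv (deriv u) x) + Complex.I * q * W x * u x - E * u x :=
      funext hf
    rw [this]
    exact ((cu''.measurable.neg.add
      ((measurable_const.mul (Complex.measurable_ofReal.comp hWmeas)).mul
        cu.measurable)).sub (measurable_const.mul cu.measurable))
  -- the cutoff function v
  set v : ℝ → ℝ := fun x => if σ + a ≤ |x| then ‖u x‖ else 0 with hvdef
  have hvm : Measurable v :=
    Measurable.ite (measurableSet_le measurable_const measurable_abs)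
      cu.measurable.norm measurable_const
  have hv_nonneg : ∀ x, 0 ≤ v x := by
    intro x; rw [hvdef]; dsimp only
    split <;> simp [norm_nonneg]
  have hv_le : ∀ x, v x ≤ ‖u x‖ := by
    intro x; rw [hvdef]; dsimp only
    split <;> simp [norm_nonneg]
  -- integrability of everything
  have int_fu : IntervalIntegrable (fun x => ‖f x‖ * ‖u x‖) volume (-π) π := by
    apply aux_intervalIntegrable (hfm.norm.mul cu.measurable.norm).aestronglyMeasurable
      (Bf * Mu)
    intro x hx
    simp only [Pi.mul_apply]
    rw [Real.norm_eq_abs, abs_of_nonneg (by positivity)]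
    exact mul_le_mul (hfb x hx) (hMu x (hIoc_sub hx)) (norm_nonneg _) hBf0
  have int_fsq : IntervalIntegrable (fun x => ‖f x‖ ^ 2) volume (-π) π := by
    apply aux_intervalIntegrable (hfm.norm.pow_const 2).aestronglyMeasurable (Bf ^ 2)
    intro x hx
    rw [Real.norm_eq_abs, abs_of_nonneg (by positivity)]
    exact pow_le_pow_left₀ (norm_nonneg _) (hfb x hx) 2
  have int_fv : IntervalIntegrable (fun x => ‖f x‖ * v x) volume (-π) π := by
    apply aux_intervalIntegrable (hfm.norm.mul hvm).aestronglyMeasurable (Bf * Mu)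
    intro x hx
    simp only [Pi.mul_apply]
    rw [Real.norm_eq_abs, abs_of_nonneg (mul_nonneg (norm_nonneg _) (hv_nonneg x))]
    exact mul_le_mul (hfb x hx) ((hv_le x).trans (hMu x (hIoc_sub hx)))
      (hv_nonneg x) hBf0
  have int_v2 : IntervalIntegrable (fun x => v x ^ 2) volume (-π) π := by
    apply aux_intervalIntegrable (hvm.pow_const 2).aestronglyMeasurable (Mu ^ 2)
    intro x hx
    rw [Real.norm_eq_abs, abs_of_nonneg (by positivity)]
    exact pow_le_pow_left₀ (hv_nonneg x) ((hv_le x).trans (hMu x (hIoc_sub hx))) 2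
  have int_Wu2 : IntervalIntegrable (fun x => W x * ‖u x‖ ^ 2) volume (-π) π := by
    apply aux_intervalIntegrable
      (hWmeas.mul (cu.measurable.norm.pow_const 2)).aestronglyMeasurable (MW * Mu ^ 2)
    intro x hx
    simp only [Pi.mul_apply]
    rw [Real.norm_eq_abs, abs_of_nonneg (mul_nonneg (hWnonneg x) (by positivity))]
    have h2 := hMu x (hIoc_sub hx)
    have h5 := hWnonneg x
    have h6 := norm_nonneg (u x)
    have h8 : ‖u x‖ ^ 2 ≤ Mu ^ 2 := pow_le_pow_left₀ h6 h2 2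
    exact mul_le_mul (hMW x) h8 (by positivity) (le_trans h5 (hMW x))
  have int_fub : IntervalIntegrable (fun x => f x * star (u x)) volume (-π) π := by
    apply aux_intervalIntegrable
      (hfm.mul cu.star.measurable).aestronglyMeasurable (Bf * Mu)
    intro x hx
    simp only [Pi.mul_apply]
    rw [norm_mul, norm_star]
    exact mul_le_mul (hfb x hx) (hMu x (hIoc_sub hx)) (norm_nonneg _) hBf0
  have int_im : IntervalIntegrable (fun x => (f x * star (u x)).im) volume (-π) π := by
    apply aux_intervalIntegrable
      ((Complex.measurable_im.comp (hfm.mul cu.star.measurable)).aestronglyMeasurable)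
      (Bf * Mu)
    intro x hx
    calc ‖(f x * star (u x)).im‖ ≤ ‖f x * star (u x)‖ := by
          rw [Real.norm_eq_abs]; exact Complex.abs_im_le_norm _
      _ ≤ Bf * Mu := by
          rw [norm_mul, norm_star]
          exact mul_le_mul (hfb x hx) (hMu x (hIoc_sub hx)) (norm_nonneg _) hBf0
  -- the imaginary-part identity
  have him_pt : ∀ x : ℝ, (f x * star (u x)).im
      = q * (W x * ‖u x‖ ^ 2) - (G' x).im / 2 := by
    intro x
    have hnorm : ‖u x‖ ^ 2 = (u x).re ^ 2 + (u x).im ^ 2 := by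
      rw [Complex.sq_norm, Complex.normSq_apply]; ring
    rw [hf x, hG'def, hnorm]
    simp only [Complex.star_def, Complex.mul_im, Complex.mul_re, Complex.sub_im,
      Complex.sub_re, Complex.add_im, Complex.add_re, Complex.neg_im, Complex.neg_re,
      Complex.I_re, Complex.I_im, Complex.ofReal_re, Complex.ofReal_im,
      Complex.conj_re, Complex.conj_im]
    ring
  have him_swap : (∫ x in (-π)..π, (f x * star (u x)).im)
      = (∫ x in (-π)..π, f x * star (u x)).im := by
    rw [intervalIntegral.integral_of_le hle, intervalIntegral.integral_of_le hle]
    exact integral_im int_fub.1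
  have hG'im_swap : (∫ x in (-π)..π, (G' x).im) = (∫ x in (-π)..π, G' x).im := by
    rw [intervalIntegral.integral_of_le hle, intervalIntegral.integral_of_le hle]
    exact integral_im (cG'.intervalIntegrable _ _).1
  have int_G'im : IntervalIntegrable (fun x => (G' x).im) volume (-π) π :=
    (Complex.continuous_im.comp cG').intervalIntegrable _ _
  have hI2id : (∫ x in (-π)..π, (f x * star (u x)).im)
      = q * ∫ x in (-π)..π, W x * ‖u x‖ ^ 2 := by
    have h1 : (∫ x in (-π)..π, (f x * star (u x)).im)
        = ∫ x in (-π)..π, (q * (W x * ‖u x‖ ^ 2) - (G' x).im / 2) :=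
      integral_congr fun x _ => him_pt x
    rw [h1, integral_sub (int_Wu2.const_mul q) (int_G'im.div_const 2)]
    have h2 : (∫ x in (-π)..π, (G' x).im / 2) = 0 := by
      rw [intervalIntegral.integral_div, hG'im_swap, hGzero]
      simp
    rw [h2, intervalIntegral.integral_const_mul, sub_zero]
  -- Step B : q ∫ W|u|² ≤ ∫ |f||u|
  have hB : q * (∫ x in (-π)..π, W x * ‖u x‖ ^ 2) ≤ ∫ x in (-π)..π, ‖f x‖ * ‖u x‖ := by
    rw [← hI2id]
    apply integral_mono_on hle int_im int_fu
    intro x _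
    calc (f x * star (u x)).im ≤ ‖f x * star (u x)‖ := Complex.im_le_norm _
      _ = ‖f x‖ * ‖u x‖ := by
          rw [norm_mul, norm_star]
  -- Step A : ∫ v² ≤ C₀ a^{-β} ∫ W|u|²
  have hapow : (0 : ℝ) < a ^ β := Real.rpow_pos_of_pos ha.1 β
  have hanegpow : a ^ (-β) = (a ^ β)⁻¹ := Real.rpow_neg ha.1.le β
  have hanegpos : (0 : ℝ) < a ^ (-β) := Real.rpow_pos_of_pos ha.1 (-β)
  have hA_pt : ∀ x ∈ Set.Icc (-π) π, v x ^ 2 ≤ C₀ * a ^ (-β) * (W x * ‖u x‖ ^ 2) := by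
    intro x hx
    by_cases hcase : σ + a ≤ |x|
    · have hd : dampV σ β x = (|x| - σ) ^ β := by
        rw [dampV, if_neg]; push_neg; linarith [ha.1]
      have h2 : a ^ β ≤ (|x| - σ) ^ β := Real.rpow_le_rpow ha.1.le (by linarith) hβ
      have hW1 : a ^ β / C₀ ≤ W x := by
        have h3 := (hWV x hx).1
        rw [hd] at h3
        calc a ^ β / C₀ ≤ (|x| - σ) ^ β / C₀ := by gcongr
          _ ≤ W x := h3
      have h1 : 1 ≤ C₀ * a ^ (-β) * W x := by
        rw [hanegpow]
        calc (1 : ℝ) = C₀ * (a ^ β)⁻¹ * (a ^ β / C₀) := by field_simp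
          _ ≤ C₀ * (a ^ β)⁻¹ * W x := by
              apply mul_le_mul_of_nonneg_left hW1 (by positivity)
      have hvx : v x = ‖u x‖ := by rw [hvdef]; exact if_pos hcase
      rw [hvx]
      calc ‖u x‖ ^ 2 = 1 * ‖u x‖ ^ 2 := (one_mul _).symm
        _ ≤ (C₀ * a ^ (-β) * W x) * ‖u x‖ ^ 2 :=
            mul_le_mul_of_nonneg_right h1 (by positivity)
        _ = C₀ * a ^ (-β) * (W x * ‖u x‖ ^ 2) := by ring
    · have hvx : v x = 0 := by rw [hvdef]; exact if_neg hcase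
      rw [hvx, zero_pow (by norm_num : 2 ≠ 0)]
      exact mul_nonneg (by positivity) (mul_nonneg (hWnonneg x) (sq_nonneg _))
  have hA : (∫ x in (-π)..π, v x ^ 2)
      ≤ C₀ * a ^ (-β) * ∫ x in (-π)..π, W x * ‖u x‖ ^ 2 := by
    calc (∫ x in (-π)..π, v x ^ 2)
        ≤ ∫ x in (-π)..π, C₀ * a ^ (-β) * (W x * ‖u x‖ ^ 2) :=
          integral_mono_on hle int_v2 (int_Wu2.const_mul _) hA_pt
      _ = C₀ * a ^ (-β) * ∫ x in (-π)..π, W x * ‖u x‖ ^ 2 := integral_const_mul _ _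
  -- Step 0 : rewrite X with the cutoff
  have hXcongr : (∫ x in (-π)..π, ‖f x‖ * ‖u x‖) = ∫ x in (-π)..π, ‖f x‖ * v x := by
    apply integral_congr
    intro x hx
    rw [hIcc] at hx
    by_cases hcase : σ + a ≤ |x|
    · have : v x = ‖u x‖ := by rw [hvdef]; exact if_pos hcase
      simp only [this]
    · have h0 : f x = 0 := hfsupp x hx (by push_neg at hcase; exact hcase)
      have : v x = 0 := by rw [hvdef]; exact if_neg hcase
      simp [h0, this]
  -- Step C and conclusion
  set K : ℝ := C₀ * a ^ (-β) * q⁻¹ with hK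
  have hKpos : 0 < K := by rw [hK]; positivity
  have hKne : K ≠ 0 := ne_of_gt hKpos
  set X : ℝ := ∫ x in (-π)..π, ‖f x‖ * ‖u x‖ with hX
  set F : ℝ := ∫ x in (-π)..π, ‖f x‖ ^ 2 with hF
  set I1 : ℝ := ∫ x in (-π)..π, v x ^ 2 with hI1
  set I2 : ℝ := ∫ x in (-π)..π, W x * ‖u x‖ ^ 2 with hI2
  have hC_pt : ∀ x ∈ Set.Icc (-π) π,
      ‖f x‖ * v x ≤ K / 2 * ‖f x‖ ^ 2 + (2 * K)⁻¹ * v x ^ 2 := by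
    intro x _
    have key : K / 2 * ‖f x‖ ^ 2 + (2 * K)⁻¹ * v x ^ 2 - ‖f x‖ * v x
        = (2 * K)⁻¹ * (K * ‖f x‖ - v x) ^ 2 := by
      field_simp
      ring
    nlinarith [mul_nonneg (inv_nonneg.2 (by linarith : (0:ℝ) ≤ 2 * K))
      (sq_nonneg (K * ‖f x‖ - v x)), key]
  have hC : X ≤ K / 2 * F + (2 * K)⁻¹ * I1 := by
    rw [hXcongr]
    calc (∫ x in (-π)..π, ‖f x‖ * v x)
        ≤ ∫ x in (-π)..π, (K / 2 * ‖f x‖ ^ 2 + (2 * K)⁻¹ * v x ^ 2) :=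
          integral_mono_on hle int_fv
            ((int_fsq.const_mul _).add (int_v2.const_mul _)) hC_pt
      _ = K / 2 * F + (2 * K)⁻¹ * I1 := by
          rw [integral_add (int_fsq.const_mul _) (int_v2.const_mul _),
            intervalIntegral.integral_const_mul, intervalIntegral.integral_const_mul]
  have hI2X : I2 ≤ q⁻¹ * X := by
    calc I2 = q⁻¹ * (q * I2) := by field_simp
      _ ≤ q⁻¹ * X := mul_le_mul_of_nonneg_left hB (by positivity)
  have hI1X : I1 ≤ K * X := by
    calc I1 ≤ C₀ * a ^ (-β) * I2 := hA
      _ ≤ C₀ * a ^ (-β) * (q⁻¹ * X) := by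
          apply mul_le_mul_of_nonneg_left hI2X (by positivity)
      _ = K * X := by rw [hK]; ring
  have hfinal : X ≤ K * F := by
    have h1 : (2 * K)⁻¹ * I1 ≤ (2 * K)⁻¹ * (K * X) :=
      mul_le_mul_of_nonneg_left hI1X (by positivity)
    have h2 : (2 * K)⁻¹ * (K * X) = X / 2 := by
      calc (2 * K)⁻¹ * (K * X) = K⁻¹ * K * X / 2 := by rw [mul_inv]; ring
        _ = X / 2 := by rw [inv_mul_cancel₀ hKne, one_mul]
    rw [h2] at h1
    linarith
  exact hfinal
end

section
/- Let 0 < a ≤ b ≤ π − σ. Suppose u, f are as in the context (u is 2π-periodic, twice continuously differentiable, f = −u'' + i·q·W·u − E·u) for some q > 0 and E ∈ ℝ, and additionally f(x) = 0 for every x ∈ [−π,π] with |x| < σ + a or |x| > σ + b. Then ∫_{−π}^{π} W·|f|·|u| ≤ C₀ · (b/a)^{β/2} · q⁻¹ · ∫_{−π}^{π} |f|². -/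
open Real MeasureTheory intervalIntegral

section Aux

/-- Cauchy-Schwarz for bounded measurable nonneg functions on a finite restricted measure. -/
lemma dampedAuxCS (s : Set ℝ) (hs : MeasurableSet s) (hfin : volume s ≠ ⊤)
    (φ ψ : ℝ → ℝ) (hφm : Measurable φ) (hψm : Measurable ψ)
    (hφ0 : ∀ x, 0 ≤ φ x) (hψ0 : ∀ x, 0 ≤ ψ x)
    (Cφ Cψ : ℝ) (hφb : ∀ x ∈ s, φ x ≤ Cφ) (hψb : ∀ x ∈ s, ψ x ≤ Cψ) :
    ∫ x in s, φ x * ψ x ≤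
      Real.sqrt (∫ x in s, φ x ^ 2) * Real.sqrt (∫ x in s, ψ x ^ 2) := by
  haveI : IsFiniteMeasure (volume.restrict s) :=
    ⟨by rwa [Measure.restrict_apply_univ, lt_top_iff_ne_top]⟩
  set μ := volume.restrict s with hμ
  have hpq : Real.HolderConjugate 2 2 := Real.HolderConjugate.two_two
  have hmem : ∀ (h : ℝ → ℝ), Measurable h → (∀ x, 0 ≤ h x) → ∀ C : ℝ, (∀ x ∈ s, h x ≤ C) →
      MemLp h (ENNReal.ofReal 2) μ := by
    intro h hm h0 C hb
    refine MemLp.of_bound hm.aestronglyMeasurable C ?_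
    rw [hμ]
    refine (ae_restrict_iff' hs).2 (ae_of_all _ fun x hx => ?_)
    rw [Real.norm_eq_abs, abs_of_nonneg (h0 x)]
    exact hb x hx
  have key := integral_mul_le_Lp_mul_Lq_of_nonneg hpq (μ := μ)
    (ae_of_all _ hφ0) (ae_of_all _ hψ0) (hmem φ hφm hφ0 Cφ hφb) (hmem ψ hψm hψ0 Cψ hψb)
  have e2 : ∀ (h : ℝ → ℝ), (∫ x, h x ^ (2:ℝ) ∂μ) = ∫ x, h x ^ 2 ∂μ := by
    intro h; congr 1; funext x
    rw [show (2:ℝ) = ((2:ℕ):ℝ) by norm_num, Real.rpow_natCast]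
  rw [e2, e2] at key
  calc ∫ x, φ x * ψ x ∂μ
      ≤ (∫ x, φ x ^ 2 ∂μ) ^ (1/2 : ℝ) * (∫ x, ψ x ^ 2 ∂μ) ^ (1/2 : ℝ) := key
  _ = _ := by rw [← Real.sqrt_eq_rpow, ← Real.sqrt_eq_rpow]

lemma dampedAuxIBP (u : ℝ → ℂ) (hu : ContDiff ℝ 2 u) (huper : Function.Periodic u (2*π)) :
    (∫ x in Set.Ioc (-π) π, deriv (deriv u) x * (starRingEnd ℂ) (u x)).im = 0 := by
  have hπ : (0:ℝ) < π := Real.pi_pos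
  have hππ : (-π:ℝ) ≤ π := by linarith
  set g := deriv u with hgdef
  have hucont : Continuous u := hu.continuous
  have hdu : Differentiable ℝ u := hu.differentiable (by norm_num)
  have hg1 : ContDiff ℝ 1 g := by
    have h2 : ContDiff ℝ (1+1 : ℕ) u := by exact_mod_cast hu
    exact (contDiff_succ_iff_deriv.mp (by exact_mod_cast h2)).2.2
  have hgcont : Continuous g := hg1.continuous
  have hdg : Differentiable ℝ g := hg1.differentiable (by norm_num)
  have hg'cont : Continuous (deriv g) := hg1.continuous_deriv le_rfl
  have hgper : Function.Periodic g (2*π) := by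
    intro x
    have h1 : (fun y => u (y + 2*π)) = u := funext fun y => huper y
    calc deriv u (x + 2*π) = deriv (fun y => u (y + 2*π)) x :=
          (deriv_comp_add_const u (2*π) x).symm
    _ = deriv u x := by rw [h1]
  have huπ : u π = u (-π) := by
    have := huper (-π); rwa [show -π + 2*π = π by ring] at this
  have hgπ : g π = g (-π) := by
    have := hgper (-π); rwa [show -π + 2*π = π by ring] at this
  have hibp : ∫ x in (-π)..π, (deriv g x * (starRingEnd ℂ) (u x)
      + g x * (starRingEnd ℂ) (g x)) = 0 := by
    have := intervalIntegral.integral_deriv_mul_eq_sub_of_hasDerivAt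
      (a := -π) (b := π) (u := g) (v := fun x => (starRingEnd ℂ) (u x))
      (u' := deriv g) (v' := fun x => (starRingEnd ℂ) (g x))
      (hgcont.continuousOn) ((Complex.continuous_conj.comp hucont).continuousOn)
      (fun x _ => (hdg x).hasDerivAt)
      (fun x _ => by simpa using ((hdu x).hasDerivAt).star)
      (hg'cont.intervalIntegrable _ _)
      ((Complex.continuous_conj.comp hgcont).intervalIntegrable _ _)
    rw [this]; rw [huπ, hgπ, sub_self]
  have hIA : IntervalIntegrable (fun x => deriv g x * (starRingEnd ℂ) (u x)) volume (-π) π :=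
    ((hg'cont.mul (Complex.continuous_conj.comp hucont))).intervalIntegrable _ _
  have hIB : IntervalIntegrable (fun x => g x * (starRingEnd ℂ) (g x)) volume (-π) π :=
    ((hgcont.mul (Complex.continuous_conj.comp hgcont))).intervalIntegrable _ _
  rw [intervalIntegral.integral_add hIA hIB] at hibp
  have hB : (∫ x in (-π)..π, g x * (starRingEnd ℂ) (g x)).im = 0 := by
    have : ∀ x, g x * (starRingEnd ℂ) (g x) = ((Complex.normSq (g x) : ℝ) : ℂ) := by
      intro x; exact Complex.mul_conj _
    rw [intervalIntegral.integral_congr (fun x _ => this x)]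
    rw [intervalIntegral.integral_ofReal]
    simp
  have hA : (∫ x in (-π)..π, deriv g x * (starRingEnd ℂ) (u x)).im = 0 := by
    have h := congrArg Complex.im hibp
    rw [Complex.add_im, hB, Complex.zero_im] at h
    linarith
  rwa [intervalIntegral.integral_of_le hππ] at hA

end Aux

/-- If `f` vanishes on `{x ∈ [-π,π] : |x| < σ + a or |x| > σ + b}` with
`0 < a ≤ b ≤ π - σ`, then `∫ W |f| |u| ≤ C₀ (b/a)^{β/2} q⁻¹ ∫ |f|²`. -/
theorem damped_wave_Wfu_support_estimate
    (C₀ σ β : ℝ) (hC₀ : 0 < C₀) (hσ : σ ∈ Set.Ioo 0 π) (hβ : 0 ≤ β)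
    (W : ℝ → ℝ) (hWper : Function.Periodic W (2 * π)) (hWmeas : Measurable W)
    (hWbdd : ∃ M : ℝ, ∀ x : ℝ, W x ≤ M) (hWnonneg : ∀ x : ℝ, 0 ≤ W x)
    (hWV : ∀ x ∈ Set.Icc (-π) π,
      dampV σ β x / C₀ ≤ W x ∧ W x ≤ C₀ * dampV σ β x)
    (a b : ℝ) (ha : 0 < a) (hab : a ≤ b) (hb : b ≤ π - σ)
    (q E : ℝ) (hq : 0 < q)
    (u f : ℝ → ℂ) (hu : ContDiff ℝ 2 u) (huper : Function.Periodic u (2 * π))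
    (hf : ∀ x : ℝ,
      f x = -(deriv (deriv u) x) + Complex.I * q * W x * u x - E * u x)
    (hfsupp : ∀ x ∈ Set.Icc (-π) π, |x| < σ + a ∨ σ + b < |x| → f x = 0) :
    ∫ x in (-π)..π, W x * ‖f x‖ * ‖u x‖ ≤
      C₀ * (b / a) ^ (β / 2) * q⁻¹ * ∫ x in (-π)..π, ‖f x‖ ^ 2 := by
  have hπ : (0:ℝ) < π := Real.pi_pos
  have hππ : (-π:ℝ) ≤ π := by linarith
  rw [intervalIntegral.integral_of_le hππ, intervalIntegral.integral_of_le hππ]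
  set s : Set ℝ := Set.Ioc (-π) π with hs
  have hsm : MeasurableSet s := measurableSet_Ioc
  have hsfin : volume s ≠ ⊤ := by
    rw [hs, Real.volume_Ioc]; exact ENNReal.ofReal_ne_top
  have hsub : s ⊆ Set.Icc (-π) π := Set.Ioc_subset_Icc_self
  -- continuity / regularity
  have hucont : Continuous u := hu.continuous
  have hg1 : ContDiff ℝ 1 (deriv u) := by
    have h2 : ContDiff ℝ (1+1 : ℕ) u := by exact_mod_cast hu
    exact (contDiff_succ_iff_deriv.mp (by exact_mod_cast h2)).2.2
  have hg'cont : Continuous (deriv (deriv u)) := hg1.continuous_deriv le_rfl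
  -- bounds
  obtain ⟨M, hM⟩ := hWbdd
  set MW := max M 0 with hMW
  have hMW0 : 0 ≤ MW := le_max_right _ _
  have hWle : ∀ x, W x ≤ MW := fun x => le_trans (hM x) (le_max_left _ _)
  obtain ⟨Cu, hCu⟩ : ∃ C, ∀ x ∈ Set.Icc (-π) π, ‖u x‖ ≤ C :=
    isCompact_Icc.exists_bound_of_continuousOn hucont.continuousOn
  have hCu0 : 0 ≤ Cu := le_trans (norm_nonneg _) (hCu (-π) ⟨le_rfl, hππ⟩)
  obtain ⟨Cg, hCg⟩ : ∃ C, ∀ x ∈ Set.Icc (-π) π, ‖deriv (deriv u) x‖ ≤ C :=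
    isCompact_Icc.exists_bound_of_continuousOn hg'cont.continuousOn
  have hCg0 : 0 ≤ Cg := le_trans (norm_nonneg _) (hCg (-π) ⟨le_rfl, hππ⟩)
  set Cf := Cg + q * MW * Cu + |E| * Cu with hCf
  have hCf0 : 0 ≤ Cf := by positivity
  have hfm : Measurable f := by
    have : Measurable (fun x => -(deriv (deriv u) x)
        + Complex.I * q * W x * u x - E * u x) := by
      apply Measurable.sub
      apply Measurable.add
      · exact hg'cont.measurable.neg
      · exact (measurable_const.mul (Complex.measurable_ofReal.comp hWmeas)).mul
          hucont.measurable
      · exact measurable_const.mul hucont.measurable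
    exact (funext hf) ▸ this
  have hfb : ∀ x ∈ Set.Icc (-π) π, ‖f x‖ ≤ Cf := by
    intro x hx
    rw [hf x]
    have h1 : ‖-(deriv (deriv u) x) + Complex.I * q * W x * u x - E * u x‖
        ≤ ‖deriv (deriv u) x‖ + ‖Complex.I * q * W x * u x‖ + ‖(E : ℂ) * u x‖ := by
      calc ‖-(deriv (deriv u) x) + Complex.I * q * W x * u x - E * u x‖
          ≤ ‖-(deriv (deriv u) x) + Complex.I * q * W x * u x‖ + ‖(E : ℂ) * u x‖ :=
            norm_sub_le _ _
      _ ≤ ‖-(deriv (deriv u) x)‖ + ‖Complex.I * q * W x * u x‖ + ‖(E : ℂ) * u x‖ := by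
            have := norm_add_le (-(deriv (deriv u) x)) (Complex.I * q * W x * u x)
            linarith
      _ = _ := by rw [norm_neg]
    have h2 : ‖Complex.I * q * W x * u x‖ = q * (W x * ‖u x‖) := by
      simp [norm_mul, Complex.norm_I, Complex.norm_real, abs_of_nonneg hq.le,
        abs_of_nonneg (hWnonneg x), mul_assoc]
    have h3 : ‖(E : ℂ) * u x‖ = |E| * ‖u x‖ := by
      simp [norm_mul, Complex.norm_real]
    have h4 := hCu x hx
    have h5 := hCg x hx
    have h6 := hWle x
    have h7 := hWnonneg x
    have h8 := norm_nonneg (u x)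
    rw [h2, h3] at h1
    have hb1 : q * (W x * ‖u x‖) ≤ q * MW * Cu := by
      have h9 : W x * ‖u x‖ ≤ MW * Cu := mul_le_mul h6 h4 h8 hMW0
      calc q * (W x * ‖u x‖) ≤ q * (MW * Cu) := mul_le_mul_of_nonneg_left h9 hq.le
      _ = q * MW * Cu := by ring
    have hb2 : |E| * ‖u x‖ ≤ |E| * Cu := mul_le_mul_of_nonneg_left h4 (abs_nonneg E)
    rw [hCf]; linarith
  -- the support bound on W
  have hsupp : ∀ x ∈ s, f x ≠ 0 → a ^ β / C₀ ≤ W x ∧ W x ≤ C₀ * b ^ β := by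
    intro x hxs hfx
    have hx : x ∈ Set.Icc (-π) π := hsub hxs
    have hnot : ¬(|x| < σ + a ∨ σ + b < |x|) := fun h => hfx (hfsupp x hx h)
    push_neg at hnot
    obtain ⟨h1, h2⟩ := hnot
    have hσx : ¬(|x| ≤ σ) := by push_neg; have := hσ.1; linarith
    have hV : dampV σ β x = (|x| - σ) ^ β := by rw [dampV, if_neg hσx]
    have hVa : a ^ β ≤ dampV σ β x := by
      rw [hV]; exact Real.rpow_le_rpow ha.le (by linarith) hβ
    have hVb : dampV σ β x ≤ b ^ β := by
      rw [hV]; exact Real.rpow_le_rpow (by linarith [hσ.1]) (by linarith) hβ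
    obtain ⟨hW1, hW2⟩ := hWV x hx
    constructor
    · calc a ^ β / C₀ ≤ dampV σ β x / C₀ := by
            exact (div_le_div_iff_of_pos_right hC₀).2 hVa
      _ ≤ W x := hW1
    · calc W x ≤ C₀ * dampV σ β x := hW2
      _ ≤ C₀ * b ^ β := by nlinarith
  -- integrability helper
  have Ibdd : ∀ (h : ℝ → ℝ), Measurable h → ∀ C : ℝ, (∀ x ∈ s, |h x| ≤ C) →
      IntegrableOn h s := by
    intro h hm C hbnd
    refine Integrable.mono' (g := fun _ => C)
      (integrableOn_const hsfin)
      hm.aestronglyMeasurable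
      ((ae_restrict_iff' hsm).2 (ae_of_all _ fun x hx => by
        rw [Real.norm_eq_abs]; exact hbnd x hx))
  -- measurable auxiliary functions
  have hnfm : Measurable (fun x => ‖f x‖) := hfm.norm
  have hnum : Measurable (fun x => ‖u x‖) := hucont.measurable.norm
  have hswm : Measurable (fun x => Real.sqrt (W x)) := hWmeas.sqrt
  have hswb : ∀ x, Real.sqrt (W x) ≤ Real.sqrt MW := fun x => Real.sqrt_le_sqrt (hWle x)
  have haβ : (0:ℝ) < a ^ β := Real.rpow_pos_of_pos ha β
  have hbβ : (0:ℝ) < b ^ β := Real.rpow_pos_of_pos (lt_of_lt_of_le ha hab) β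
  set K1 := Real.sqrt (C₀ * b ^ β) with hK1
  set K2 := Real.sqrt (C₀ / a ^ β) with hK2
  set F := ∫ x in s, ‖f x‖ ^ 2 with hFdef
  set U := ∫ x in s, W x * ‖u x‖ ^ 2 with hUdef
  set G := ∫ x in s, W x * ‖f x‖ ^ 2 with hGdef
  have F0 : 0 ≤ F := by
    rw [hFdef]; exact integral_nonneg fun x => sq_nonneg _
  have U0 : 0 ≤ U := by
    rw [hUdef]; exact integral_nonneg fun x => mul_nonneg (hWnonneg x) (sq_nonneg _)
  have G0 : 0 ≤ G := by
    rw [hGdef]; exact integral_nonneg fun x => mul_nonneg (hWnonneg x) (sq_nonneg _)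
  -- Cauchy-Schwarz 1: X ≤ √G √U
  have hXG : (∫ x in s, W x * ‖f x‖ * ‖u x‖) ≤ Real.sqrt G * Real.sqrt U := by
    have e1 : (∫ x in s, W x * ‖f x‖ * ‖u x‖)
        = ∫ x in s, (Real.sqrt (W x) * ‖f x‖) * (Real.sqrt (W x) * ‖u x‖) := by
      refine integral_congr_ae (ae_of_all _ fun x => ?_)
      dsimp only
      rw [mul_mul_mul_comm, Real.mul_self_sqrt (hWnonneg x), mul_assoc]
    have e2 : G = ∫ x in s, (Real.sqrt (W x) * ‖f x‖) ^ 2 := by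
      rw [hGdef]; refine integral_congr_ae (ae_of_all _ fun x => ?_)
      dsimp only
      rw [mul_pow, Real.sq_sqrt (hWnonneg x)]
    have e3 : U = ∫ x in s, (Real.sqrt (W x) * ‖u x‖) ^ 2 := by
      rw [hUdef]; refine integral_congr_ae (ae_of_all _ fun x => ?_)
      dsimp only
      rw [mul_pow, Real.sq_sqrt (hWnonneg x)]
    rw [e1, e2, e3]
    refine dampedAuxCS s hsm hsfin _ _ (hswm.mul hnfm) (hswm.mul hnum)
      (fun x => mul_nonneg (Real.sqrt_nonneg _) (norm_nonneg _))
      (fun x => mul_nonneg (Real.sqrt_nonneg _) (norm_nonneg _))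
      (Real.sqrt MW * Cf) (Real.sqrt MW * Cu) (fun x hx => ?_) (fun x hx => ?_)
    · exact mul_le_mul (hswb x) (hfb x (hsub hx)) (norm_nonneg _) (Real.sqrt_nonneg _)
    · exact mul_le_mul (hswb x) (hCu x (hsub hx)) (norm_nonneg _) (Real.sqrt_nonneg _)
  -- Cauchy-Schwarz 2: ∫ ‖f‖ (√W ‖u‖) ≤ √F √U
  have hCS2 : (∫ x in s, ‖f x‖ * (Real.sqrt (W x) * ‖u x‖))
      ≤ Real.sqrt F * Real.sqrt U := by
    have e3 : U = ∫ x in s, (Real.sqrt (W x) * ‖u x‖) ^ 2 := by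
      rw [hUdef]; refine integral_congr_ae (ae_of_all _ fun x => ?_)
      dsimp only
      rw [mul_pow, Real.sq_sqrt (hWnonneg x)]
    rw [e3, hFdef]
    refine dampedAuxCS s hsm hsfin _ _ hnfm (hswm.mul hnum)
      (fun x => norm_nonneg _)
      (fun x => mul_nonneg (Real.sqrt_nonneg _) (norm_nonneg _))
      Cf (Real.sqrt MW * Cu) (fun x hx => hfb x (hsub hx)) (fun x hx => ?_)
    exact mul_le_mul (hswb x) (hCu x (hsub hx)) (norm_nonneg _) (Real.sqrt_nonneg _)
  -- the energy identity q U = ∫ Im(f conj u)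
  have hA_int : Integrable (fun x => deriv (deriv u) x * (starRingEnd ℂ) (u x))
      (volume.restrict s) :=
    (hg'cont.mul (Complex.continuous_conj.comp hucont)).integrableOn_Ioc
  have hfcu_int : Integrable (fun x => f x * (starRingEnd ℂ) (u x)) (volume.restrict s) := by
    refine Integrable.mono' (g := fun _ => Cf * Cu)
      (integrableOn_const hsfin)
      ((hfm.mul (Complex.continuous_conj.comp hucont).measurable).aestronglyMeasurable)
      ((ae_restrict_iff' hsm).2 (ae_of_all _ fun x hx => ?_))
    rw [norm_mul, RCLike.norm_conj]
    exact mul_le_mul (hfb x (hsub hx)) (hCu x (hsub hx)) (norm_nonneg _) hCf0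
  have him : ∀ x, (f x * (starRingEnd ℂ) (u x)).im
      = -((deriv (deriv u) x * (starRingEnd ℂ) (u x)).im) + q * (W x * ‖u x‖ ^ 2) := by
    intro x
    have h1 : u x * (starRingEnd ℂ) (u x) = ((‖u x‖ ^ 2 : ℝ) : ℂ) := by
      rw [Complex.mul_conj]
      norm_cast
      rw [Complex.normSq_eq_norm_sq]
    have key : f x * (starRingEnd ℂ) (u x)
        = -(deriv (deriv u) x * (starRingEnd ℂ) (u x))
          + Complex.I * (q : ℂ) * (W x : ℂ) * ((‖u x‖ ^ 2 : ℝ) : ℂ)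
          - (E : ℂ) * ((‖u x‖ ^ 2 : ℝ) : ℂ) := by
      rw [hf x]
      linear_combination (Complex.I * (q : ℂ) * (W x : ℂ) - (E : ℂ)) * h1
    rw [key]
    simp [Complex.add_im, Complex.sub_im, Complex.neg_im, Complex.mul_im,
      Complex.I_re, Complex.I_im, Complex.ofReal_re, Complex.ofReal_im,
      ← Complex.ofReal_pow]
    ring
  have hWu2_int : IntegrableOn (fun x => W x * ‖u x‖ ^ 2) s := by
    refine Ibdd _ (hWmeas.mul (hnum.pow measurable_const)) (MW * Cu ^ 2) fun x hx => ?_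
    rw [abs_of_nonneg (mul_nonneg (hWnonneg x) (sq_nonneg _))]
    exact mul_le_mul (hWle x) (pow_le_pow_left₀ (norm_nonneg _) (hCu x (hsub hx)) 2)
      (sq_nonneg _) hMW0
  have hqU : q * U = ∫ x in s, (f x * (starRingEnd ℂ) (u x)).im := by
    have e1 : (∫ x in s, (f x * (starRingEnd ℂ) (u x)).im)
        = ∫ x in s, (-((deriv (deriv u) x * (starRingEnd ℂ) (u x)).im)
            + q * (W x * ‖u x‖ ^ 2)) :=
      integral_congr_ae (ae_of_all _ him)
    have hneg : Integrable (fun x => -((deriv (deriv u) x * (starRingEnd ℂ) (u x)).im))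
        (volume.restrict s) := hA_int.im.neg
    have himint : (∫ x in s, ((deriv (deriv u) x * (starRingEnd ℂ) (u x)).im))
        = (∫ x in s, deriv (deriv u) x * (starRingEnd ℂ) (u x)).im := integral_im hA_int
    rw [e1, integral_add hneg (hWu2_int.const_mul q), MeasureTheory.integral_neg, himint,
      dampedAuxIBP u hu huper, MeasureTheory.integral_const_mul, hUdef]
    ring
  -- pointwise: Im ≤ ‖f‖‖u‖
  have hqU2 : q * U ≤ ∫ x in s, ‖f x‖ * ‖u x‖ := by
    rw [hqU]
    refine integral_mono hfcu_int.im (Ibdd _ (hnfm.mul hnum) (Cf * Cu) fun x hx => ?_)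
      (fun x => ?_)
    · rw [abs_of_nonneg (mul_nonneg (norm_nonneg _) (norm_nonneg _))]
      exact mul_le_mul (hfb x (hsub hx)) (hCu x (hsub hx)) (norm_nonneg _) hCf0
    · calc (f x * (starRingEnd ℂ) (u x)).im ≤ |(f x * (starRingEnd ℂ) (u x)).im| :=
            le_abs_self _
      _ ≤ ‖f x * (starRingEnd ℂ) (u x)‖ := Complex.abs_im_le_norm _
      _ = ‖f x‖ * ‖u x‖ := by
            rw [norm_mul, RCLike.norm_conj]
  -- insert √W using the lower bound on the support
  have hstep : (∫ x in s, ‖f x‖ * ‖u x‖)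
      ≤ K2 * ∫ x in s, ‖f x‖ * (Real.sqrt (W x) * ‖u x‖) := by
    rw [← MeasureTheory.integral_const_mul]
    refine integral_mono_ae (Ibdd _ (hnfm.mul hnum) (Cf * Cu) fun x hx => ?_)
      ((Ibdd _ (hnfm.mul (hswm.mul hnum)) (Cf * (Real.sqrt MW * Cu)) fun x hx => ?_).const_mul K2)
      ((ae_restrict_iff' hsm).2 (ae_of_all _ fun x hx => ?_))
    · rw [abs_of_nonneg (mul_nonneg (norm_nonneg _) (norm_nonneg _))]
      exact mul_le_mul (hfb x (hsub hx)) (hCu x (hsub hx)) (norm_nonneg _) hCf0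
    · show |‖f x‖ * (Real.sqrt (W x) * ‖u x‖)| ≤ _
      rw [abs_of_nonneg (mul_nonneg (norm_nonneg _)
        (mul_nonneg (Real.sqrt_nonneg _) (norm_nonneg _)))]
      exact mul_le_mul (hfb x (hsub hx))
        (mul_le_mul (hswb x) (hCu x (hsub hx)) (norm_nonneg _) (Real.sqrt_nonneg _))
        (mul_nonneg (Real.sqrt_nonneg _) (norm_nonneg _)) hCf0
    · by_cases hfx : f x = 0
      · simp [hfx]
      · have hW1 := (hsupp x hx hfx).1
        have hs1 : Real.sqrt (a ^ β / C₀) ≤ Real.sqrt (W x) := Real.sqrt_le_sqrt hW1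
        have hs2 : K2 * Real.sqrt (a ^ β / C₀) = 1 := by
          rw [hK2, ← Real.sqrt_mul (by positivity)]
          rw [show C₀ / a ^ β * (a ^ β / C₀) = 1 by field_simp]
          exact Real.sqrt_one
        have hs3 : 1 ≤ K2 * Real.sqrt (W x) := by
          rw [← hs2]
          exact mul_le_mul_of_nonneg_left hs1 (Real.sqrt_nonneg _)
        have h0 : 0 ≤ ‖f x‖ * ‖u x‖ := mul_nonneg (norm_nonneg _) (norm_nonneg _)
        calc ‖f x‖ * ‖u x‖ = 1 * (‖f x‖ * ‖u x‖) := (one_mul _).symm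
        _ ≤ (K2 * Real.sqrt (W x)) * (‖f x‖ * ‖u x‖) :=
            mul_le_mul_of_nonneg_right hs3 h0
        _ = K2 * (‖f x‖ * (Real.sqrt (W x) * ‖u x‖)) := by ring
  -- G ≤ C₀ b^β F
  have hGF : G ≤ (C₀ * b ^ β) * F := by
    rw [hGdef, hFdef, ← MeasureTheory.integral_const_mul]
    refine integral_mono_ae (Ibdd _ (hWmeas.mul (hnfm.pow measurable_const))
        (MW * Cf ^ 2) fun x hx => ?_)
      ((Ibdd _ (hnfm.pow measurable_const) (Cf ^ 2) fun x hx => ?_).const_mul _)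
      ((ae_restrict_iff' hsm).2 (ae_of_all _ fun x hx => ?_))
    · rw [abs_of_nonneg (mul_nonneg (hWnonneg x) (sq_nonneg _))]
      exact mul_le_mul (hWle x) (pow_le_pow_left₀ (norm_nonneg _) (hfb x (hsub hx)) 2)
        (sq_nonneg _) hMW0
    · rw [abs_of_nonneg (sq_nonneg _)]
      exact pow_le_pow_left₀ (norm_nonneg _) (hfb x (hsub hx)) 2
    · by_cases hfx : f x = 0
      · simp [hfx]
      · exact mul_le_mul_of_nonneg_right (hsupp x hx hfx).2 (sq_nonneg _)
  -- the constant identity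
  have hK : K1 * K2 = C₀ * (b / a) ^ (β / 2) := by
    have hba : (0:ℝ) < b / a := div_pos (lt_of_lt_of_le ha hab) ha
    have e1 : (C₀ * b ^ β) * (C₀ / a ^ β) = C₀ ^ 2 * (b / a) ^ β := by
      rw [Real.div_rpow (by linarith : (0:ℝ) ≤ b) ha.le]
      field_simp
    have e2 : ((b / a) ^ (β / 2)) ^ 2 = (b / a) ^ β := by
      rw [← Real.rpow_natCast ((b / a) ^ (β / 2)) 2, ← Real.rpow_mul hba.le]
      norm_num
    rw [hK1, hK2, ← Real.sqrt_mul (by positivity), e1, ← e2,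
      show C₀ ^ 2 * ((b / a) ^ (β / 2)) ^ 2 = (C₀ * (b / a) ^ (β / 2)) ^ 2 by ring,
      Real.sqrt_sq (by positivity)]
  -- conclude
  have hG12 : Real.sqrt G ≤ K1 * Real.sqrt F := by
    rw [hK1, ← Real.sqrt_mul (by positivity)]
    exact Real.sqrt_le_sqrt hGF
  rcases eq_or_lt_of_le U0 with hU0 | hU0
  · have : Real.sqrt U = 0 := by rw [← hU0, Real.sqrt_zero]
    have hX0 : (∫ x in s, W x * ‖f x‖ * ‖u x‖) ≤ 0 := by
      calc (∫ x in s, W x * ‖f x‖ * ‖u x‖) ≤ Real.sqrt G * Real.sqrt U := hXG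
      _ = 0 := by rw [this, mul_zero]
    refine le_trans hX0 ?_
    have : (0:ℝ) ≤ (b / a) ^ (β / 2) := Real.rpow_nonneg (div_nonneg (by linarith) ha.le) _
    have := mul_nonneg (mul_nonneg (mul_nonneg hC₀.le this) (inv_nonneg.2 hq.le)) F0
    linarith
  · have hsU : 0 < Real.sqrt U := Real.sqrt_pos.2 hU0
    have hUb : q * U ≤ K2 * (Real.sqrt F * Real.sqrt U) :=
      le_trans hqU2 (le_trans hstep (mul_le_mul_of_nonneg_left hCS2 (Real.sqrt_nonneg _)))
    have h5 : q * Real.sqrt U ≤ K2 * Real.sqrt F := by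
      apply le_of_mul_le_mul_right _ hsU
      calc q * Real.sqrt U * Real.sqrt U = q * U := by
            rw [mul_assoc, Real.mul_self_sqrt U0]
      _ ≤ K2 * (Real.sqrt F * Real.sqrt U) := hUb
      _ = K2 * Real.sqrt F * Real.sqrt U := by ring
    have h6 : Real.sqrt U ≤ q⁻¹ * (K2 * Real.sqrt F) := by
      calc Real.sqrt U = q⁻¹ * (q * Real.sqrt U) := by field_simp
      _ ≤ q⁻¹ * (K2 * Real.sqrt F) := mul_le_mul_of_nonneg_left h5 (inv_nonneg.2 hq.le)
    calc (∫ x in s, W x * ‖f x‖ * ‖u x‖) ≤ Real.sqrt G * Real.sqrt U := hXG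
    _ ≤ (K1 * Real.sqrt F) * (q⁻¹ * (K2 * Real.sqrt F)) := by
        refine mul_le_mul hG12 h6 (Real.sqrt_nonneg _) ?_
        exact mul_nonneg (Real.sqrt_nonneg _) (Real.sqrt_nonneg _)
    _ = (K1 * K2) * q⁻¹ * (Real.sqrt F * Real.sqrt F) := by ring
    _ = C₀ * (b / a) ^ (β / 2) * q⁻¹ * F := by
        rw [Real.mul_self_sqrt F0, hK]
end
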